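/- Let q > 1 be a real number. For every integer n ≥ 0, the integral over x ∈ [−2, 2] of X_n(x)·√(4−x²)/(2π) with respect to Lebesgue measure equals 1 if n = 0, equals −1 if n = 2, and equals 0 for all other n. -/

import Mathlib

/-- `X n` is the Satake transform of the characteristic function `f_n` of the double coset
`GL₂(ℤ_p) diag(p^n,1) GL₂(ℤ_p)`, viewed as a function of `x = q^s + q^{-s} = 2 cos θ`:
`X 0 = 1` and, for `n ≥ 1`,
`X n (2 cos θ) = q^{n/2} (sin((n+1)θ) - q⁻¹ sin((n-1)θ)) / sin θ`,
expressed via Chebyshev polynomials of the second kind. -/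
noncomputable def satakeX (q : ℝ) (n : ℕ) (x : ℝ) : ℝ :=
  if n = 0 then 1
  else (Real.sqrt q) ^ n *
    ((Polynomial.Chebyshev.U ℝ (n : ℤ)).eval (x / 2) -
      q⁻¹ * (Polynomial.Chebyshev.U ℝ ((n : ℤ) - 2)).eval (x / 2))

open Real intervalIntegral Set

lemma cosInt (c : ℤ) : ∫ θ in (0:ℝ)..π, Real.cos (c * θ) = if c = 0 then π else 0 := by
  rcases eq_or_ne c 0 with h | h
  · simp [h]
  · have hc : (c:ℝ) ≠ 0 := Int.cast_ne_zero.mpr h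
    rw [if_neg h, intervalIntegral.integral_comp_mul_left Real.cos hc]
    simp [integral_cos, Real.sin_int_mul_pi]

lemma sinInt (m : ℤ) (hm : m ≠ -1) :
    ∫ θ in (0:ℝ)..π, Real.sin (m * θ) * Real.sin θ = if m = 1 then π / 2 else 0 := by
  have key : ∀ θ : ℝ, Real.sin (m * θ) * Real.sin θ
      = (Real.cos ((m - 1) * θ) - Real.cos ((m + 1) * θ)) / 2 := by
    intro θ
    have := Real.cos_sub_cos ((m - 1) * θ) ((m + 1) * θ)
    have h1 : ((m:ℝ) - 1) * θ + ((m:ℝ) + 1) * θ = 2 * (m * θ) := by ring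
    have h2 : ((m:ℝ) - 1) * θ - ((m:ℝ) + 1) * θ = 2 * (-θ) := by ring
    rw [h1, h2] at this
    simp only [mul_div_cancel_left₀ _ (two_ne_zero (α := ℝ))] at this
    rw [this, Real.sin_neg]
    ring
  simp_rw [key]
  rw [intervalIntegral.integral_div, intervalIntegral.integral_sub
    (Continuous.intervalIntegrable (by fun_prop) 0 π)
    (Continuous.intervalIntegrable (by fun_prop) 0 π)]
  have e1 := cosInt (m - 1)
  have e2 := cosInt (m + 1)
  push_cast at e1 e2
  rw [e1, e2]
  rcases eq_or_ne m 1 with h | h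
  · simp [h]
  · rw [if_neg h, if_neg (by omega : m - 1 ≠ 0), if_neg (by omega : m + 1 ≠ 0)]
    simp

lemma coreInt (k : ℤ) (hk : -1 ≤ k) :
    ∫ x in (-2:ℝ)..2, (Polynomial.Chebyshev.U ℝ k).eval (x / 2) * Real.sqrt (4 - x ^ 2)
      = if k = 0 then 2 * π else 0 := by
  set g : ℝ → ℝ := fun x => (Polynomial.Chebyshev.U ℝ k).eval (x / 2) * Real.sqrt (4 - x ^ 2)
    with hg
  have hgc : Continuous g := by
    apply Continuous.mul
    · exact (Polynomial.Chebyshev.U ℝ k).continuous_aeval.comp (continuous_id.div_const 2)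
    · exact Real.continuous_sqrt.comp (by continuity)
  have sub := intervalIntegral.integral_comp_smul_deriv
    (f := fun θ => 2 * Real.cos θ) (f' := fun θ => -2 * Real.sin θ) (a := 0) (b := π) (g := g)
    (fun x _ => by simpa [mul_neg, neg_mul, mul_comm] using ((Real.hasDerivAt_cos x).const_mul 2))
    ((by fun_prop : Continuous fun θ : ℝ => -2 * Real.sin θ).continuousOn) hgc
  simp only [Real.cos_zero, Real.cos_pi, mul_one] at sub
  have h2 : (2:ℝ) * (-1) = -2 := by norm_num
  rw [h2, intervalIntegral.integral_symm (-2) 2] at sub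
  have hval : ∀ θ ∈ Set.uIcc (0:ℝ) π,
      (fun θ => (-2 * Real.sin θ) • (g ∘ fun θ => 2 * Real.cos θ) θ) θ
      = (fun θ => -4 * (Real.sin ((k+1) * θ) * Real.sin θ)) θ := by
    intro θ hθ
    rw [Set.uIcc_of_le Real.pi_pos.le] at hθ
    have hs : 0 ≤ Real.sin θ := Real.sin_nonneg_of_nonneg_of_le_pi hθ.1 hθ.2
    simp only [Function.comp, smul_eq_mul, g]
    have : Real.sqrt (4 - (2 * Real.cos θ) ^ 2) = 2 * Real.sin θ := by
      have : (4:ℝ) - (2 * Real.cos θ) ^ 2 = (2 * Real.sin θ) ^ 2 := by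
        have := Real.sin_sq_add_cos_sq θ; nlinarith
      rw [this, Real.sqrt_sq (by positivity)]
    rw [this]
    have h4 : (2:ℝ) * Real.cos θ / 2 = Real.cos θ := by ring
    rw [h4]
    have hU := Polynomial.Chebyshev.U_real_cos θ k
    nlinarith [hU]
  rw [intervalIntegral.integral_congr hval] at sub
  rw [intervalIntegral.integral_const_mul] at sub
  have hs := sinInt (k + 1) (by omega)
  push_cast at hs
  rw [hs] at sub
  rcases eq_or_ne k 0 with h | h
  · rw [if_pos h]
    rw [h] at sub; norm_num at sub
    linarith [sub]
  · rw [if_neg h]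
    rw [if_neg (by omega : k + 1 ≠ 1)] at sub
    simpa using sub.symm

/-- Second identity of Corollary 5.2 evaluated on the Hecke basis `{f_n}`:
the integral of `X_n` against the Sato–Tate measure `√(4-x²)/(2π) dx` on `[-2,2]`
equals `1` if `n = 0`, `-1` if `n = 2`, and `0` otherwise. -/
theorem satoTate_hecke_basis (q : ℝ) (hq : 1 < q) (n : ℕ) :
    ∫ x in (-2 : ℝ)..2, satakeX q n x * (Real.sqrt (4 - x ^ 2) / (2 * Real.pi)) =
      if n = 0 then 1 else if n = 2 then -1 else 0 := by
  have hpi : (2 * π) ≠ 0 := by positivity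
  rcases eq_or_ne n 0 with h0 | h0
  · subst h0
    simp only [satakeX, if_true, ite_true, one_mul]
    norm_num
    have h := coreInt 0 (by norm_num)
    simp only [Polynomial.Chebyshev.U_zero, Polynomial.eval_one, one_mul, if_pos rfl] at h
    rw [h]; simp [div_self hpi]
  · have hcont : ∀ k : ℤ, Continuous fun x : ℝ =>
        (Polynomial.Chebyshev.U ℝ k).eval (x / 2) * Real.sqrt (4 - x ^ 2) := fun k => by
      apply Continuous.mul
      · exact (Polynomial.Chebyshev.U ℝ k).continuous_aeval.comp (continuous_id.div_const 2)
      · exact Real.continuous_sqrt.comp (by continuity)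
    simp only [satakeX, if_neg h0]
    have key : ∀ x : ℝ, (Real.sqrt q) ^ n *
        ((Polynomial.Chebyshev.U ℝ (n : ℤ)).eval (x / 2) -
          q⁻¹ * (Polynomial.Chebyshev.U ℝ ((n : ℤ) - 2)).eval (x / 2)) *
        (Real.sqrt (4 - x ^ 2) / (2 * π))
        = ((Real.sqrt q) ^ n / (2 * π)) *
          ((Polynomial.Chebyshev.U ℝ (n : ℤ)).eval (x / 2) * Real.sqrt (4 - x ^ 2) -
            q⁻¹ * ((Polynomial.Chebyshev.U ℝ ((n : ℤ) - 2)).eval (x / 2) *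
              Real.sqrt (4 - x ^ 2))) := fun x => by ring
    simp_rw [key]
    rw [intervalIntegral.integral_const_mul, intervalIntegral.integral_sub
      ((hcont n).intervalIntegrable _ _)
      ((show Continuous fun x : ℝ => q⁻¹ * ((Polynomial.Chebyshev.U ℝ ((n : ℤ) - 2)).eval (x / 2) *
        Real.sqrt (4 - x ^ 2)) from continuous_const.mul (hcont ((n : ℤ) - 2))).intervalIntegrable _ _),
      intervalIntegral.integral_const_mul, coreInt (n : ℤ) (by omega),
      coreInt ((n : ℤ) - 2) (by omega)]
    rw [if_neg (by exact_mod_cast h0)]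
    rcases eq_or_ne n 2 with h2 | h2
    · subst h2
      norm_num
      rw [sq_sqrt (by linarith : (0:ℝ) ≤ q)]
      field_simp
    · rw [if_neg h2, if_neg (by omega : (n : ℤ) - 2 ≠ 0)]
      simp
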